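/- Let n ≥ 3, 1 ≤ τ ≤ n − 2, e = n(n−1)/2, and let v = (V^{(1)},…,V^{(τ)}) ∈ ℝ^{nτ} be such that the nτ real numbers {V_i^{(k)}} are algebraically independent over ℚ. Then the stacked voltage coefficient matrix A(v) ∈ ℝ^{nτ×e} has rank nτ − τ(τ+1)/2 < e; equivalently, the linear map y ↦ A(v)y on ℝ^e has a nontrivial kernel, so no right-hand side i ∈ ℝ^{nτ} determines y uniquely from i = A(v)y. Hence τ = n − 1 is the minimum number of measurements for which a generic stack of measurements uniquely determines y. -/

import Mathlib

open Matrix BigOperators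

/-- Edges of the complete graph on `Fin n`: ordered pairs `(i, j)` with `i < j`. -/
abbrev CEdge (n : ℕ) := {p : Fin n × Fin n // p.1 < p.2}

/-- Incidence matrix of the complete graph on `Fin n`, each edge `(i, j)` (with `i < j`)
oriented from `i` to `j`:  `H i l = 1` if edge `l` leaves node `i`, `-1` if it enters `i`,
and `0` otherwise. -/
def incid (F : Type*) [Field F] (n : ℕ) : Matrix (Fin n) (CEdge n) F :=
  Matrix.of fun i l => if i = l.val.1 then 1 else if i = l.val.2 then -1 else 0

/-- Voltage coefficient matrix `Ã(V) = H ⬝ diag(Hᵀ V)`. -/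
def Atilde {F : Type*} [Field F] {n : ℕ} (V : Fin n → F) : Matrix (Fin n) (CEdge n) F :=
  incid F n * Matrix.diagonal ((incid F n)ᵀ *ᵥ V)

/-- Stacked voltage coefficient matrix `A(v)` for `τ` measurements `v 1, …, v τ`:
the row indexed by `(k, i)` is the `i`-th row of `Ã(V^(k))`. -/
def Astack {F : Type*} [Field F] {n τ : ℕ} (v : Fin τ → Fin n → F) :
    Matrix (Fin τ × Fin n) (CEdge n) F :=
  Matrix.of fun p l => Atilde (v p.1) p.2 l

/-- Rigidity matrix of the complete graph at the configuration `x = (x 1, …, x n)`,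
`x i ∈ F^τ`: the row indexed by edge `(i, j)`, `i < j`, has the entries of `(x i − x j)ᵀ`
in the `τ` columns of node `i`, the entries of `(x j − x i)ᵀ` in the `τ` columns of node `j`,
and zeros elsewhere. -/
def rigidityM {F : Type*} [Field F] {n τ : ℕ} (x : Fin n → Fin τ → F) :
    Matrix (CEdge n) (Fin n × Fin τ) F :=
  Matrix.of fun l p =>
    if p.1 = l.val.1 then x l.val.1 p.2 - x l.val.2 p.2
    else if p.1 = l.val.2 then x l.val.2 p.2 - x l.val.1 p.2
    else 0

namespace Stmt5Aux

variable {n τ : ℕ}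

lemma incid_dot (f : Fin n → ℝ) (l : CEdge n) :
    ∑ i, incid ℝ n i l * f i = f l.val.1 - f l.val.2 := by
  have hne : l.val.1 ≠ l.val.2 := ne_of_lt l.prop
  have h : ∀ i, incid ℝ n i l * f i =
      (if i = l.val.1 then f i else 0) - (if i = l.val.2 then f i else 0) := by
    intro i
    simp only [incid, Matrix.of_apply]
    by_cases h1 : i = l.val.1
    · subst h1; simp [hne]
    · by_cases h2 : i = l.val.2
      · subst h2; simp [h1, Ne.symm hne]
      · simp [h1, h2]
  simp_rw [h, Finset.sum_sub_distrib]
  simp [Finset.sum_ite_eq']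

lemma astack_apply (v : Fin τ → Fin n → ℝ) (k : Fin τ) (i : Fin n) (l : CEdge n) :
    Astack v (k, i) l = incid ℝ n i l * (v k l.val.1 - v k l.val.2) := by
  have : ((incid ℝ n)ᵀ *ᵥ (v k)) l = v k l.val.1 - v k l.val.2 := by
    simp only [Matrix.mulVec, dotProduct, Matrix.transpose_apply]
    exact incid_dot (v k) l
  simp only [Astack, Atilde, Matrix.of_apply, Matrix.mul_diagonal, this]

lemma mulVec_transpose (v : Fin τ → Fin n → ℝ) (y : Fin τ × Fin n → ℝ) (l : CEdge n) :
    ((Astack v)ᵀ *ᵥ y) l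
      = ∑ k, (v k l.val.1 - v k l.val.2) * (y (k, l.val.1) - y (k, l.val.2)) := by
  have h0 : ((Astack v)ᵀ *ᵥ y) l = ∑ p : Fin τ × Fin n, Astack v p l * y p := by
    simp [Matrix.mulVec, dotProduct, Matrix.transpose_apply]
  rw [h0, Fintype.sum_prod_type]
  refine Finset.sum_congr rfl fun k _ => ?_
  calc ∑ i, Astack v (k, i) l * y (k, i)
      = ∑ i, (v k l.val.1 - v k l.val.2) * (incid ℝ n i l * y (k, i)) := by
        refine Finset.sum_congr rfl fun i _ => ?_
        rw [astack_apply]; ring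
    _ = (v k l.val.1 - v k l.val.2) * ∑ i, incid ℝ n i l * y (k, i) := by
        rw [Finset.mul_sum]
    _ = _ := by rw [incid_dot (fun i => y (k, i)) l]




variable {n τ : ℕ}

/-- infinitesimal rotation generator -/
def rotV (v : Fin τ → Fin n → ℝ) (e : CEdge τ) : Fin τ × Fin n → ℝ := fun p =>
  (if p.1 = e.val.1 then v e.val.2 p.2 else 0) - (if p.1 = e.val.2 then v e.val.1 p.2 else 0)

/-- infinitesimal translation generator -/
def transV (c : Fin τ) : Fin τ × Fin n → ℝ := fun p => if p.1 = c then 1 else 0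

def base (v : Fin τ → Fin n → ℝ) : CEdge τ ⊕ Fin τ → (Fin τ × Fin n → ℝ) :=
  Sum.elim (rotV v) transV

/-- The combination identity: a skew combination of rotations plus translations is a motion. -/
lemma combo (v : Fin τ → Fin n → ℝ) (T : Matrix (Fin τ) (Fin τ) ℝ) (hT : Tᵀ = -T)
    (t : Fin τ → ℝ) (p : Fin τ × Fin n) :
    (∑ e : CEdge τ, T e.val.1 e.val.2 * rotV v e p) + (∑ c, t c * transV c p)
      = (∑ m, T p.1 m * v m p.2) + t p.1 := by
  obtain ⟨k, i⟩ := p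
  have hdiag : ∀ a, T a a = 0 := by
    intro a
    have h := congrFun (congrFun hT a) a
    simp only [Matrix.transpose_apply, Matrix.neg_apply] at h
    linarith
  have htrans : (∑ c, t c * transV c (k, i)) = t k := by
    simp [transV, mul_ite, mul_one, mul_zero, Finset.sum_ite_eq]
  rw [htrans]
  congr 1
  -- rotation part
  classical
  set F : Fin τ × Fin τ → ℝ := fun q => if q.1 = k then T q.1 q.2 * v q.2 i else 0 with hF
  have hedge : ∀ e : CEdge τ, T e.val.1 e.val.2 * rotV v e (k, i) = F e.val + F e.val.swap := by
    rintro ⟨⟨a, b⟩, hab⟩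
    have hab' : a ≠ b := ne_of_lt hab
    simp only [rotV, hF, Prod.swap_prod_mk]
    by_cases h1 : k = a
    · subst h1
      have h2 : ¬ (k = b) := hab'
      have h3 : ¬ (b = k) := fun hh => hab' hh.symm
      simp only [if_pos rfl, if_neg h2, if_neg h3, eq_self_iff_true, if_true]
      ring
    · by_cases h2 : k = b
      · subst h2
        have h3 : ¬ (a = k) := fun hh => h1 hh.symm
        have h4 : ¬ (k = a) := h1
        have hT' : T k a = -T a k := by
          have h := congrFun (congrFun hT a) k
          simp only [Matrix.transpose_apply, Matrix.neg_apply] at h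
          linarith
        simp only [if_neg h4, if_pos rfl, if_neg h3, hT', eq_self_iff_true, if_true]
        ring
      · have h3 : ¬ (a = k) := fun hh => h1 hh.symm
        have h4 : ¬ (b = k) := fun hh => h2 hh.symm
        simp only [if_neg h1, if_neg h2, if_neg h3, if_neg h4]
        ring
  rw [Finset.sum_congr rfl fun e _ => hedge e]
  rw [Finset.sum_add_distrib]
  have hs : ∀ G : Fin τ × Fin τ → ℝ, ∑ e : CEdge τ, G e.val
      = ∑ q ∈ Finset.univ.filter (fun q : Fin τ × Fin τ => q.1 < q.2), G q := by
    intro G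
    exact (Finset.sum_subtype (p := fun q : Fin τ × Fin τ => q.1 < q.2)
      (Finset.univ.filter (fun q : Fin τ × Fin τ => q.1 < q.2)) (fun q => by simp) G).symm
  rw [hs F, hs (fun q => F q.swap)]
  have hswap : ∑ q ∈ Finset.univ.filter (fun q : Fin τ × Fin τ => q.1 < q.2), F q.swap
      = ∑ q ∈ Finset.univ.filter (fun q : Fin τ × Fin τ => q.2 < q.1), F q := by
    have hmap : (Finset.univ.filter (fun q : Fin τ × Fin τ => q.1 < q.2)).map
        (Equiv.prodComm (Fin τ) (Fin τ)).toEmbedding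
        = Finset.univ.filter (fun q : Fin τ × Fin τ => q.2 < q.1) := by
      ext q
      simp [Finset.mem_map_equiv]
    rw [← hmap, Finset.sum_map]
    exact Finset.sum_congr rfl fun q _ => rfl
  rw [hswap]
  have hgt : ∑ q ∈ Finset.univ.filter (fun q : Fin τ × Fin τ => q.2 < q.1), F q
      = ∑ q ∈ Finset.univ.filter (fun q : Fin τ × Fin τ => ¬ q.1 < q.2), F q := by
    refine Finset.sum_subset ?_ ?_
    · intro q hq
      simp only [Finset.mem_filter, Finset.mem_univ, true_and] at hq ⊢
      exact asymm hq
    · intro q hq hq2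
      simp only [Finset.mem_filter, Finset.mem_univ, true_and, not_lt] at hq hq2
      have : q.1 = q.2 := le_antisymm hq2 hq
      simp only [hF]
      by_cases hk : q.1 = k
      · rw [if_pos hk, ← this, hdiag]; ring
      · rw [if_neg hk]
  rw [hgt, Finset.sum_filter_add_sum_filter_not]
  -- now ∑ q : Fin τ × Fin τ, F q = ∑ m, T k m * v m i
  rw [Fintype.sum_prod_type]
  have hinner : ∀ a, (∑ b, if a = k then T a b * v b i else 0)
      = if a = k then ∑ b, T a b * v b i else 0 := by
    intro a; split <;> simp
  simp_rw [hF, hinner]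
  simp [Finset.sum_ite_eq']


end Stmt5Aux
section Part3
namespace Stmt5Aux
variable {n τ : ℕ}

lemma base_mem_ker (v : Fin τ → Fin n → ℝ) (j : CEdge τ ⊕ Fin τ) :
    base v j ∈ LinearMap.ker (Astack v)ᵀ.mulVecLin := by
  rw [LinearMap.mem_ker, Matrix.mulVecLin_apply]
  funext l
  rw [mulVec_transpose, Pi.zero_apply]
  cases j with
  | inl e =>
    obtain ⟨⟨a, b⟩, hab⟩ := e
    have hab' : a ≠ b := ne_of_lt hab
    have h : ∀ k, (v k l.val.1 - v k l.val.2) *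
        (base v (Sum.inl ⟨(a, b), hab⟩) (k, l.val.1) - base v (Sum.inl ⟨(a, b), hab⟩) (k, l.val.2))
        = (if k = a then (v k l.val.1 - v k l.val.2) * (v b l.val.1 - v b l.val.2) else 0)
          - (if k = b then (v k l.val.1 - v k l.val.2) * (v a l.val.1 - v a l.val.2) else 0) := by
      intro k
      simp only [base, Sum.elim_inl, rotV]
      by_cases h1 : k = a
      · subst h1
        simp only [eq_self_iff_true, if_true, if_neg hab']
        ring
      · by_cases h2 : k = b
        · subst h2
          simp only [if_neg h1, eq_self_iff_true, if_true]
          ring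
        · simp only [if_neg h1, if_neg h2]
          ring
    rw [Finset.sum_congr rfl fun k _ => h k, Finset.sum_sub_distrib]
    simp [Finset.sum_ite_eq']
    ring
  | inr c =>
    have h : ∀ k, (v k l.val.1 - v k l.val.2) *
        (base v (Sum.inr c) (k, l.val.1) - base v (Sum.inr c) (k, l.val.2)) = 0 := by
      intro k
      simp [base, transV]
    rw [Finset.sum_congr rfl fun k _ => h k]
    simp

def Smat (c : CEdge τ → ℝ) : Matrix (Fin τ) (Fin τ) ℝ := fun a b =>
  if h : a < b then c ⟨(a, b), h⟩ else if h' : b < a then -c ⟨(b, a), h'⟩ else 0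

lemma Smat_skew (c : CEdge τ → ℝ) : (Smat c)ᵀ = -(Smat c) := by
  ext a b
  simp only [Matrix.transpose_apply, Matrix.neg_apply, Smat]
  rcases lt_trichotomy a b with h | h | h
  · rw [dif_neg (asymm h), dif_pos h, dif_pos h]
  · subst h; simp
  · rw [dif_pos h, dif_neg (asymm h), dif_pos h]; ring

lemma Smat_apply_edge (c : CEdge τ → ℝ) (e : CEdge τ) :
    Smat c e.val.1 e.val.2 = c e := by
  obtain ⟨⟨a, b⟩, h⟩ := e
  exact dif_pos h

def emb (h : τ + 1 ≤ n) (a : Fin τ) : Fin n := ⟨a.val + 1, by omega⟩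

def nd0 (h : τ + 1 ≤ n) : Fin n := ⟨0, by omega⟩

def Zmat (h : τ + 1 ≤ n) (v : Fin τ → Fin n → ℝ) : Matrix (Fin τ) (Fin τ) ℝ :=
  fun a k => v k (emb h a) - v k (nd0 h)

lemma Zmat_det_isUnit (h : τ + 1 ≤ n) (v : Fin τ → Fin n → ℝ)
    (hgen : AlgebraicIndependent ℚ (fun p : Fin τ × Fin n => v p.1 p.2)) :
    IsUnit (Zmat h v).det := by
  rw [isUnit_iff_ne_zero]
  classical
  set M : Matrix (Fin τ) (Fin τ) (MvPolynomial (Fin τ × Fin n) ℚ) :=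
    Matrix.of fun a k : Fin τ =>
      (MvPolynomial.X (k, emb h a) - MvPolynomial.X (k, nd0 h)) with hM
  set P : MvPolynomial (Fin τ × Fin n) ℚ := M.det with hPdef
  have hPval : (MvPolynomial.aeval (fun p : Fin τ × Fin n => v p.1 p.2)) P = (Zmat h v).det := by
    rw [hPdef]
    rw [show ((MvPolynomial.aeval (fun p : Fin τ × Fin n => v p.1 p.2)) P
        = ((MvPolynomial.aeval (fun p : Fin τ × Fin n => v p.1 p.2)).toRingHom) P) from rfl]
    rw [RingHom.map_det ((MvPolynomial.aeval (fun p : Fin τ × Fin n => v p.1 p.2)).toRingHom) M]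
    congr 1
    ext a k
    simp [hM, Zmat, RingHom.mapMatrix_apply, Matrix.map_apply]
  have hemb0 : ∀ k : Fin τ, nd0 h ≠ emb h k := by
    intro k hk
    have := congrArg Fin.val hk
    simp [emb, nd0] at this
  have hembinj : ∀ a k : Fin τ, emb h a = emb h k ↔ a = k := by
    intro a k
    constructor
    · intro hk
      have := congrArg Fin.val hk
      simp only [emb] at this
      exact Fin.ext (by omega)
    · rintro rfl; rfl
  have hP0 : P ≠ 0 := by
    intro h0
    have h1 := congrArg (MvPolynomial.eval
      (fun p : Fin τ × Fin n => if p.2 = emb h p.1 then (1 : ℚ) else 0)) h0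
    rw [hPdef, RingHom.map_det] at h1
    have h2 : (MvPolynomial.eval
        (fun p : Fin τ × Fin n => if p.2 = emb h p.1 then (1 : ℚ) else 0)).mapMatrix M
        = (1 : Matrix (Fin τ) (Fin τ) ℚ) := by
      ext a k
      simp only [hM, RingHom.mapMatrix_apply, Matrix.map_apply, Matrix.of_apply, map_sub,
        MvPolynomial.eval_X]
      rw [if_neg (hemb0 k)]
      by_cases hak : a = k
      · subst hak
        simp [Matrix.one_apply]
      · rw [if_neg (fun hh => hak ((hembinj a k).mp hh))]
        simp [Matrix.one_apply, hak]
    rw [h2] at h1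
    simp at h1
  intro hdet0
  apply hP0
  apply hgen
  rw [map_zero, hPval, hdet0]

end Stmt5Aux
end Part3
section Part4
namespace Stmt5Aux
variable {n τ : ℕ}

lemma skew_dot (S : Matrix (Fin τ) (Fin τ) ℝ) (hS : Sᵀ = -S) (p q : Fin τ → ℝ) :
    ∑ k, p k * (S *ᵥ q) k = -∑ k, q k * (S *ᵥ p) k := by
  have hS' : ∀ a b, S a b = -S b a := by
    intro a b
    have h := congrFun (congrFun hS b) a
    simp only [Matrix.transpose_apply, Matrix.neg_apply] at h
    linarith
  simp only [Matrix.mulVec, dotProduct, Finset.mul_sum]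
  rw [Finset.sum_comm]
  rw [← Finset.sum_neg_distrib]
  refine Finset.sum_congr rfl fun m _ => ?_
  rw [← Finset.sum_neg_distrib]
  refine Finset.sum_congr rfl fun k _ => ?_
  rw [hS' k m]
  ring

lemma base_li (h : τ + 1 ≤ n) (v : Fin τ → Fin n → ℝ) (hZ : IsUnit (Zmat h v).det) :
    LinearIndependent ℝ (base v) := by
  rw [Fintype.linearIndependent_iff]
  intro c hc
  set S := Smat (fun e => c (Sum.inl e)) with hSdef
  have hskew := Smat_skew (fun e => c (Sum.inl e))
  set t : Fin τ → ℝ := fun m => c (Sum.inr m) with ht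
  have hskew' : Sᵀ = -S := by rw [hSdef]; exact hskew
  have hmot : ∀ p : Fin τ × Fin n, (∑ m, S p.1 m * v m p.2) + t p.1 = 0 := by
    intro p
    have h1 := congrFun hc p
    rw [Finset.sum_apply] at h1
    rw [Fintype.sum_sum_type] at h1
    simp only [Pi.smul_apply, smul_eq_mul, Pi.zero_apply] at h1
    rw [← combo v S hskew' t p]
    have e1 : ∑ e : CEdge τ, S e.val.1 e.val.2 * rotV v e p
        = ∑ x : CEdge τ, c (Sum.inl x) * base v (Sum.inl x) p :=
      Finset.sum_congr rfl fun e _ => by rw [hSdef, Smat_apply_edge]; rfl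
    have e2 : (∑ m, t m * transV m p) = ∑ x : Fin τ, c (Sum.inr x) * base v (Sum.inr x) p := rfl
    rw [e1, e2]
    exact h1
  have hSZ0 : S * (Zmat h v)ᵀ = 0 := by
    ext k a
    have h1 := hmot (k, emb h a)
    have h2 := hmot (k, nd0 h)
    simp only [Matrix.mul_apply, Matrix.transpose_apply, Matrix.zero_apply]
    have e1 : ∑ m, S k m * Zmat h v a m
        = (∑ m, S k m * v m (emb h a)) - ∑ m, S k m * v m (nd0 h) := by
      rw [← Finset.sum_sub_distrib]
      refine Finset.sum_congr rfl fun m _ => ?_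
      simp only [Zmat]
      ring
    simp only at h1 h2 e1 ⊢
    linarith
  have hZT : IsUnit ((Zmat h v)ᵀ).det := by rwa [Matrix.det_transpose]
  have hS0 : S = 0 := by
    calc S = S * (Zmat h v)ᵀ * ((Zmat h v)ᵀ)⁻¹ :=
            (Matrix.mul_nonsing_inv_cancel_right _ S hZT).symm
    _ = 0 := by rw [hSZ0, Matrix.zero_mul]
  have ht0 : ∀ m, t m = 0 := by
    intro m
    have h1 := hmot (m, nd0 h)
    rw [hSdef] at hS0
    simp only [hSdef, hS0, Matrix.zero_apply, zero_mul, Finset.sum_const_zero, zero_add] at h1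
    exact h1
  intro j
  cases j with
  | inl e =>
    have he : S e.val.1 e.val.2 = 0 := by rw [hS0]; rfl
    rw [hSdef, Smat_apply_edge] at he
    exact he
  | inr m => exact ht0 m

lemma ker_le_span (h : τ + 1 ≤ n) (v : Fin τ → Fin n → ℝ) (hZ : IsUnit (Zmat h v).det) :
    LinearMap.ker (Astack v)ᵀ.mulVecLin ≤ Submodule.span ℝ (Set.range (base v)) := by
  intro y hy
  rw [LinearMap.mem_ker, Matrix.mulVecLin_apply] at hy
  have hy' : ∀ l : CEdge n,
      ∑ k, (v k l.val.1 - v k l.val.2) * (y (k, l.val.1) - y (k, l.val.2)) = 0 := by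
    intro l
    rw [← mulVec_transpose, hy, Pi.zero_apply]
  have hsym : ∀ i j : Fin n, ∑ k, (v k i - v k j) * (y (k, i) - y (k, j)) = 0 := by
    intro i j
    rcases lt_trichotomy i j with hij | rfl | hij
    · exact hy' ⟨(i, j), hij⟩
    · simp
    · have h2 := hy' ⟨(j, i), hij⟩
      calc ∑ k, (v k i - v k j) * (y (k, i) - y (k, j))
          = ∑ k, (v k j - v k i) * (y (k, j) - y (k, i)) :=
            Finset.sum_congr rfl fun k _ => by ring
        _ = 0 := h2
  set z : Fin n → Fin τ → ℝ := fun i k => v k i - v k (nd0 h) with hzdef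
  set w : Fin n → Fin τ → ℝ := fun i k => y (k, i) - y (k, nd0 h) with hwdef
  have hbil : ∀ i j : Fin n, (∑ k, z i k * w j k) + (∑ k, z j k * w i k) = 0 := by
    intro i j
    have h1 := hsym i j
    have h2 := hsym i (nd0 h)
    have h3 := hsym j (nd0 h)
    have e1 : ∑ k, (v k i - v k j) * (y (k, i) - y (k, j))
        = ((∑ k, z i k * w i k) + ∑ k, z j k * w j k)
          - ((∑ k, z i k * w j k) + ∑ k, z j k * w i k) := by
      rw [← Finset.sum_add_distrib, ← Finset.sum_add_distrib, ← Finset.sum_sub_distrib]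
      refine Finset.sum_congr rfl fun k _ => ?_
      simp only [hzdef, hwdef]
      ring
    have e2 : ∑ k, (v k i - v k (nd0 h)) * (y (k, i) - y (k, nd0 h))
        = ∑ k, z i k * w i k := Finset.sum_congr rfl fun k _ => rfl
    have e3 : ∑ k, (v k j - v k (nd0 h)) * (y (k, j) - y (k, nd0 h))
        = ∑ k, z j k * w j k := Finset.sum_congr rfl fun k _ => rfl
    rw [e2] at h2
    rw [e3] at h3
    rw [e1, h2, h3] at h1
    linarith
  set Z := Zmat h v with hZdef
  set W : Matrix (Fin τ) (Fin τ) ℝ := fun a k => w (emb h a) k with hWdef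
  have hZz : ∀ a k, Z a k = z (emb h a) k := fun a k => rfl
  have hZT : IsUnit (Zᵀ).det := by rwa [Matrix.det_transpose]
  set S := Wᵀ * (Zᵀ)⁻¹ with hSdef
  have hSZ : S * Zᵀ = Wᵀ := by
    rw [hSdef, Matrix.mul_assoc, Matrix.nonsing_inv_mul _ hZT, Matrix.mul_one]
  have hM : W * Zᵀ = -(Z * Wᵀ) := by
    ext a b
    have hb := hbil (emb h b) (emb h a)
    simp only [Matrix.mul_apply, Matrix.neg_apply, Matrix.transpose_apply]
    have l1 : ∑ j, W a j * Z b j = ∑ k, z (emb h b) k * w (emb h a) k :=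
      Finset.sum_congr rfl fun k _ => mul_comm _ _
    have l2 : ∑ j, Z a j * W b j = ∑ k, z (emb h a) k * w (emb h b) k := rfl
    rw [l1, l2]
    linarith
  have hskew : Sᵀ = -S := by
    have h1 : Sᵀ = Z⁻¹ * W := by
      rw [hSdef, Matrix.transpose_mul, Matrix.transpose_nonsing_inv, Matrix.transpose_transpose,
        Matrix.transpose_transpose]
    have h2 : Z⁻¹ * W = -(Wᵀ * (Zᵀ)⁻¹) := by
      calc Z⁻¹ * W = Z⁻¹ * (W * Zᵀ * (Zᵀ)⁻¹) := by
            rw [Matrix.mul_nonsing_inv_cancel_right _ W hZT]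
        _ = Z⁻¹ * (-(Z * Wᵀ) * (Zᵀ)⁻¹) := by rw [hM]
        _ = -(Z⁻¹ * (Z * (Wᵀ * (Zᵀ)⁻¹))) := by
            rw [Matrix.neg_mul, Matrix.mul_neg, Matrix.mul_assoc]
        _ = -(Wᵀ * (Zᵀ)⁻¹) := by rw [Matrix.nonsing_inv_mul_cancel_left _ _ hZ]
    rw [h1, h2, hSdef]
  have hSe : ∀ a, S *ᵥ (z (emb h a)) = w (emb h a) := by
    intro a
    funext k
    have h1 := congrFun (congrFun hSZ k) a
    simp only [Matrix.mul_apply, Matrix.transpose_apply] at h1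
    simp only [Matrix.mulVec, dotProduct]
    exact h1
  have hSw : ∀ i, S *ᵥ (z i) = w i := by
    intro i
    set u : Fin τ → ℝ := fun k => w i k - (S *ᵥ z i) k with hu
    have hZu : Z *ᵥ u = 0 := by
      funext a
      have c1 : ∑ k, z (emb h a) k * w i k = -∑ k, z i k * w (emb h a) k := by
        have hb := hbil i (emb h a)
        linarith
      have c2 : ∑ k, z (emb h a) k * (S *ᵥ z i) k = -∑ k, z i k * (S *ᵥ z (emb h a)) k :=
        skew_dot S hskew _ _
      have c3 : ∑ k, z i k * (S *ᵥ z (emb h a)) k = ∑ k, z i k * w (emb h a) k := by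
        rw [hSe]
      have c4 : (Z *ᵥ u) a
          = (∑ k, z (emb h a) k * w i k) - ∑ k, z (emb h a) k * (S *ᵥ z i) k := by
        simp only [Matrix.mulVec, dotProduct, hu]
        rw [← Finset.sum_sub_distrib]
        refine Finset.sum_congr rfl fun k _ => ?_
        rw [hZz]
        ring
      rw [Pi.zero_apply, c4, c1, c2, c3]
      ring
    have hu0 : u = 0 := by
      have h1 : Z⁻¹ *ᵥ (Z *ᵥ u) = u := by
        rw [Matrix.mulVec_mulVec, Matrix.nonsing_inv_mul _ hZ, Matrix.one_mulVec]
      rw [← h1, hZu, Matrix.mulVec_zero]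
    funext k
    have h1 := congrFun hu0 k
    simp only [hu, Pi.zero_apply] at h1
    linarith
  set t : Fin τ → ℝ := fun k => y (k, nd0 h) - (S *ᵥ (fun m => v m (nd0 h))) k with htdef
  have hmotion : ∀ p : Fin τ × Fin n, y p = (∑ m, S p.1 m * v m p.2) + t p.1 := by
    rintro ⟨k, i⟩
    have h1 := congrFun (hSw i) k
    simp only [Matrix.mulVec, dotProduct] at h1 ⊢
    have expand : ∑ m, S k m * z i m
        = (∑ m, S k m * v m i) - ∑ m, S k m * v m (nd0 h) := by
      rw [← Finset.sum_sub_distrib]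
      refine Finset.sum_congr rfl fun m _ => ?_
      simp only [hzdef]
      ring
    rw [expand] at h1
    have h2 : w i k = y (k, i) - y (k, nd0 h) := rfl
    rw [h2] at h1
    simp only [htdef, Matrix.mulVec, dotProduct]
    linarith
  have hcomb : y = (∑ e : CEdge τ, S e.val.1 e.val.2 • base v (Sum.inl e))
      + ∑ c : Fin τ, t c • base v (Sum.inr c) := by
    funext p
    have h1 := combo v S hskew t p
    simp only [Pi.add_apply, Finset.sum_apply, Pi.smul_apply, smul_eq_mul]
    rw [hmotion p, ← h1]
    rfl
  rw [hcomb]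
  refine Submodule.add_mem _
    (Submodule.sum_mem _ fun e _ => Submodule.smul_mem _ _
      (Submodule.subset_span ⟨Sum.inl e, rfl⟩))
    (Submodule.sum_mem _ fun c _ => Submodule.smul_mem _ _
      (Submodule.subset_span ⟨Sum.inr c, rfl⟩))

end Stmt5Aux
end Part4
section Part5
namespace Stmt5Aux
variable {n τ : ℕ}

lemma card_cedge (m : ℕ) : Fintype.card (CEdge m) = m * (m - 1) / 2 := by
  have e : CEdge m ≃ Σ b : Fin m, Fin b.val :=
    { toFun := fun p => ⟨p.val.2, ⟨p.val.1.val, p.prop⟩⟩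
      invFun := fun q => ⟨(⟨q.2.val, lt_trans q.2.isLt q.1.isLt⟩, q.1), q.2.isLt⟩
      left_inv := by rintro ⟨⟨a, b⟩, hab⟩; rfl
      right_inv := by rintro ⟨b, a⟩; rfl }
  rw [Fintype.card_congr e, Fintype.card_sigma]
  simp only [Fintype.card_fin]
  rw [Fin.sum_univ_eq_sum_range (fun i => i) m]
  exact Finset.sum_range_id m

lemma ker_finrank (h : τ + 1 ≤ n) (v : Fin τ → Fin n → ℝ) (hZ : IsUnit (Zmat h v).det) :
    Module.finrank ℝ (LinearMap.ker (Astack v)ᵀ.mulVecLin) = τ * (τ - 1) / 2 + τ := by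
  have hker : LinearMap.ker (Astack v)ᵀ.mulVecLin = Submodule.span ℝ (Set.range (base v)) := by
    refine le_antisymm (ker_le_span h v hZ) ?_
    rw [Submodule.span_le]
    rintro _ ⟨j, rfl⟩
    exact base_mem_ker v j
  rw [hker, finrank_span_eq_card (base_li h v hZ), Fintype.card_sum, card_cedge,
    Fintype.card_fin]

lemma rank_astack (h : τ + 1 ≤ n) (v : Fin τ → Fin n → ℝ)
    (hgen : AlgebraicIndependent ℚ (fun p : Fin τ × Fin n => v p.1 p.2)) :
    (Astack v).rank = n * τ - τ * (τ + 1) / 2 := by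
  have hZ := Zmat_det_isUnit h v hgen
  have hrn := LinearMap.finrank_range_add_finrank_ker ((Astack v)ᵀ.mulVecLin)
  rw [ker_finrank h v hZ] at hrn
  have hdom : Module.finrank ℝ (Fin τ × Fin n → ℝ) = τ * n := by
    rw [Module.finrank_fintype_fun_eq_card, Fintype.card_prod, Fintype.card_fin,
      Fintype.card_fin]
  rw [hdom] at hrn
  have harith : τ * (τ + 1) / 2 = τ * (τ - 1) / 2 + τ := by
    cases τ with
    | zero => rfl
    | succ s =>
      have h1 : (s + 1) * (s + 1 + 1) = (s + 1) * (s + 1 - 1) + 2 * (s + 1) := by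
        have hss : s + 1 - 1 = s := rfl
        rw [hss]; ring
      rw [h1, Nat.add_mul_div_left _ _ (by norm_num : 0 < 2)]
  have hrank : (Astack v)ᵀ.rank = τ * n - (τ * (τ - 1) / 2 + τ) := by
    rw [Matrix.rank]
    omega
  rw [← Matrix.rank_transpose (Astack v), hrank, harith, mul_comm τ n]

lemma exists_algIndep (ι : Type) [Finite ι] : ∃ f : ι → ℝ, AlgebraicIndependent ℚ f := by
  obtain ⟨s, hs⟩ := exists_isTranscendenceBasis ℚ ℝ
  have hsInf : s.Infinite := by
    by_contra hfin
    rw [Set.not_infinite] at hfin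
    haveI := hfin.to_subtype
    set K := Algebra.adjoin ℚ (Set.range ((↑) : s → ℝ)) with hK
    have hKcard : Cardinal.mk K ≤ Cardinal.aleph0 := by
      have e := hs.1.aevalEquiv
      have h1 : Cardinal.mk K = Cardinal.mk (MvPolynomial s ℚ) :=
        (Cardinal.mk_congr e.toEquiv).symm
      rw [h1]
      refine MvPolynomial.cardinalMk_le_max.trans ?_
      refine max_le (max_le ?_ ?_) le_rfl
      · exact Cardinal.mk_le_aleph0
      · exact Cardinal.mk_le_aleph0
    haveI : Algebra.IsAlgebraic K ℝ := hs.isAlgebraic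
    haveI : Module.IsTorsionFree K ℝ :=
      Module.isTorsionFree_iff_algebraMap_injective.mpr Subtype.val_injective
    have h2 := Algebra.IsAlgebraic.cardinalMk_le_max K ℝ
    rw [Cardinal.mk_real] at h2
    have h3 : Cardinal.continuum ≤ Cardinal.aleph0 := h2.trans (max_le hKcard le_rfl)
    exact absurd h3 (not_le.mpr Cardinal.aleph0_lt_continuum)
  haveI : Infinite s := hsInf.to_subtype
  have hcard : Cardinal.mk ι ≤ Cardinal.mk s :=
    (Cardinal.lt_aleph0_of_finite ι).le.trans (Cardinal.aleph0_le_mk s)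
  obtain ⟨g⟩ := Cardinal.le_def ι s |>.mp hcard
  exact ⟨fun i => (g i : ℝ), hs.1.comp g g.injective⟩

end Stmt5Aux
end Part5
section Part6
namespace Stmt5Aux
variable {n τ : ℕ}

lemma exists_ker_vec (v : Fin τ → Fin n → ℝ)
    (hr : (Astack v).rank < Fintype.card (CEdge n)) :
    ∃ y : CEdge n → ℝ, y ≠ 0 ∧ Astack v *ᵥ y = 0 := by
  have hrn := LinearMap.finrank_range_add_finrank_ker ((Astack v).mulVecLin)
  have hdom : Module.finrank ℝ (CEdge n → ℝ) = Fintype.card (CEdge n) :=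
    Module.finrank_fintype_fun_eq_card ℝ
  rw [hdom] at hrn
  have hkpos : 0 < Module.finrank ℝ (LinearMap.ker (Astack v).mulVecLin) := by
    have : (Astack v).rank = Module.finrank ℝ (LinearMap.range (Astack v).mulVecLin) := rfl
    omega
  have hne : LinearMap.ker (Astack v).mulVecLin ≠ ⊥ := by
    intro hbot
    rw [hbot, finrank_bot] at hkpos
    exact lt_irrefl 0 hkpos
  obtain ⟨y, hy, hy0⟩ := Submodule.exists_mem_ne_zero_of_ne_bot hne
  rw [LinearMap.mem_ker, Matrix.mulVecLin_apply] at hy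
  exact ⟨y, hy0, hy⟩

lemma inj_of_rank_eq_card (v : Fin τ → Fin n → ℝ)
    (hr : (Astack v).rank = Fintype.card (CEdge n)) :
    Function.Injective (fun y : CEdge n → ℝ => Astack v *ᵥ y) := by
  have hrn := LinearMap.finrank_range_add_finrank_ker ((Astack v).mulVecLin)
  have hdom : Module.finrank ℝ (CEdge n → ℝ) = Fintype.card (CEdge n) :=
    Module.finrank_fintype_fun_eq_card ℝ
  rw [hdom] at hrn
  have hk0 : Module.finrank ℝ (LinearMap.ker (Astack v).mulVecLin) = 0 := by
    have : (Astack v).rank = Module.finrank ℝ (LinearMap.range (Astack v).mulVecLin) := rfl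
    omega
  have hbot : LinearMap.ker (Astack v).mulVecLin = ⊥ :=
    Submodule.finrank_eq_zero.mp hk0
  have hinj := LinearMap.ker_eq_bot.mp hbot
  intro y1 y2 hy
  exact hinj (by simpa [Matrix.mulVecLin_apply] using hy)

lemma rank_lt_card (hn : 3 ≤ n) (hτ1 : 1 ≤ τ) (hτ2 : τ ≤ n - 2) :
    n * τ - τ * (τ + 1) / 2 < n * (n - 1) / 2 := by
  obtain ⟨r, hr⟩ : ∃ r, n = τ + r + 2 := ⟨n - τ - 2, by omega⟩
  subst hr
  obtain ⟨a, ha⟩ := Nat.even_mul_succ_self τ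
  obtain ⟨b, hb⟩ := Nat.even_mul_succ_self (τ + r + 1)
  have e1 : τ * (τ + 1) / 2 = a := by rw [ha]; omega
  have e2 : (τ + r + 2) * (τ + r + 2 - 1) / 2 = b := by
    have h1 : τ + r + 2 - 1 = τ + r + 1 := rfl
    rw [h1, mul_comm, hb]
    omega
  rw [e1, e2]
  have key : 2 * ((τ + r + 2) * τ) + 2 ≤ (b + b) + (a + a) := by
    rw [← ha, ← hb]
    nlinarith []
  have hb1 : 1 ≤ b := by nlinarith [hb]
  have hb1 : 1 ≤ b := by nlinarith [hb]
  generalize (τ + r + 2) * τ = P at key ⊢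
  omega

theorem stmt5_core (hn : 3 ≤ n) (hτ1 : 1 ≤ τ) (hτ2 : τ ≤ n - 2)
    (v : Fin τ → Fin n → ℝ)
    (hgen : AlgebraicIndependent ℚ (fun p : Fin τ × Fin n => v p.1 p.2)) :
    (Astack v).rank = n * τ - τ * (τ + 1) / 2 ∧
    ∃ y : CEdge n → ℝ, y ≠ 0 ∧ Astack v *ᵥ y = 0 := by
  have h1 : τ + 1 ≤ n := by omega
  have hrank := rank_astack h1 v hgen
  refine ⟨hrank, exists_ker_vec v ?_⟩
  rw [hrank, card_cedge]
  exact rank_lt_card hn hτ1 hτ2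

end Stmt5Aux
end Part6

/-- with `1 ≤ τ ≤ n − 2` generic real measurements, `A(v)` has rank
`nτ − τ(τ+1)/2 < e`, so `y ↦ A(v)y` has a nontrivial kernel and no right-hand side
determines `y` uniquely; hence `τ = n − 1` is the minimum number of measurements for
which a generic stack of measurements uniquely determines `y`. -/
theorem stmt5 (n τ : ℕ) (hn : 3 ≤ n) (hτ1 : 1 ≤ τ) (hτ2 : τ ≤ n - 2)
    (v : Fin τ → Fin n → ℝ)
    (hgen : AlgebraicIndependent ℚ (fun p : Fin τ × Fin n => v p.1 p.2)) :
    (Astack v).rank = n * τ - τ * (τ + 1) / 2 ∧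
    n * τ - τ * (τ + 1) / 2 < n * (n - 1) / 2 ∧
    (∃ y : CEdge n → ℝ, y ≠ 0 ∧ Astack v *ᵥ y = 0) ∧
    (∀ (i : Fin τ × Fin n → ℝ) (y : CEdge n → ℝ),
        i = Astack v *ᵥ y → ∃ y' : CEdge n → ℝ, y' ≠ y ∧ i = Astack v *ᵥ y') ∧
    IsLeast {τ' : ℕ |
        ∀ v' : Fin τ' → Fin n → ℝ,
          AlgebraicIndependent ℚ (fun p : Fin τ' × Fin n => v' p.1 p.2) →
          Function.Injective (fun y : CEdge n → ℝ => Astack v' *ᵥ y)}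
      (n - 1) := by
  obtain ⟨hrank, y₀, hy₀ne, hy₀ker⟩ := Stmt5Aux.stmt5_core hn hτ1 hτ2 v hgen
  refine ⟨hrank, Stmt5Aux.rank_lt_card hn hτ1 hτ2, ⟨y₀, hy₀ne, hy₀ker⟩, ?_, ?_, ?_⟩
  · -- non-uniqueness
    intro i y hiy
    refine ⟨y + y₀, ?_, ?_⟩
    · intro hcontra
      exact hy₀ne ((add_eq_left).mp hcontra)
    · rw [hiy, Matrix.mulVec_add, hy₀ker, add_zero]
  · -- membership of n - 1
    intro v' hgen'
    have hn1 : (n - 1) + 1 ≤ n := by omega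
    have hr := Stmt5Aux.rank_astack hn1 v' hgen'
    apply Stmt5Aux.inj_of_rank_eq_card
    rw [hr, Stmt5Aux.card_cedge]
    have h2 : n - 1 + 1 = n := by omega
    rw [h2, mul_comm (n - 1) n]
    obtain ⟨q, hq⟩ := Nat.even_mul_succ_self (n - 1)
    rw [h2] at hq
    rw [mul_comm (n - 1) n] at hq
    generalize n * (n - 1) = M at hq ⊢
    omega
  · -- lower bound
    intro m hm
    by_contra hlt
    push_neg at hlt
    have hm2 : m ≤ n - 2 := by omega
    rcases Nat.eq_zero_or_pos m with hm0 | hm1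
    · subst hm0
      have hempty : AlgebraicIndependent ℚ
          (fun p : Fin 0 × Fin n => (fun (_ : Fin 0) (_ : Fin n) => (0 : ℝ)) p.1 p.2) :=
        algebraicIndependent_empty_type
      have hinj := hm (fun _ _ => 0) hempty
      set e0 : CEdge n := ⟨(⟨0, by omega⟩, ⟨1, by omega⟩), Fin.mk_lt_mk.mpr zero_lt_one⟩ with he0
      have heq : Astack (fun (_ : Fin 0) (_ : Fin n) => (0 : ℝ)) *ᵥ (0 : CEdge n → ℝ)
          = Astack (fun _ _ => 0) *ᵥ (fun _ => 1) := by
        funext p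
        exact (p.1).elim0
      have h01 := hinj heq
      have := congrFun h01 e0
      simp at this
    · obtain ⟨f, hf⟩ := Stmt5Aux.exists_algIndep (Fin m × Fin n)
      set v' : Fin m → Fin n → ℝ := fun k i => f (k, i) with hv'
      have hgen' : AlgebraicIndependent ℚ (fun p : Fin m × Fin n => v' p.1 p.2) := hf
      obtain ⟨hr, y, hy0, hAy⟩ := Stmt5Aux.stmt5_core hn hm1 hm2 v' hgen'
      have hinj := hm v' hgen'
      have hy : y = 0 := hinj (show Astack v' *ᵥ y = Astack v' *ᵥ 0 by
        rw [hAy, Matrix.mulVec_zero])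
      exact hy0 hy
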